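/- Suppose the index set T of 𝒫 = {P_t : t ∈ T} is a bounded subset of ℝ^m equipped with a norm ‖·‖. If there exists a Borel measurable map F : ℝ → ℝ with E^P(|F|) < +∞ such that |f_s(x) − f_t(x)| ≤ ‖s − t‖ · F(x) for all s, t ∈ T and all x ∈ ℝ, then Ê̲_n^𝒫(f) is a strongly consistent estimator of E̲^𝒫(f), i.e., |Ê̲_n^𝒫(f) − E̲^𝒫(f)|* → 0 P^∞-almost surely. -/

import Mathlib

open MeasureTheory Filter Topology ProbabilityTheory
open scoped ENNReal

noncomputable section

/-- The positive part of an extended real number, as an element of `ℝ≥0∞`. -/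
def epos (x : EReal) : ℝ≥0∞ := if x = ⊤ then ⊤ else ENNReal.ofReal x.toReal

/-- The (possibly infinite) expectation `E(g) = ∫ g⁺ − ∫ g⁻` of an extended-real map. -/
def eExp {Ω : Type*} [MeasurableSpace Ω] (μ : Measure Ω) (g : Ω → EReal) : EReal :=
  ((∫⁻ ω, epos (g ω) ∂μ : ℝ≥0∞) : EReal) - ((∫⁻ ω, epos (-(g ω)) ∂μ : ℝ≥0∞) : EReal)

/-- `E(g)` exists: at least one of `E(g⁺)`, `E(g⁻)` is finite. -/
def eExpExists {Ω : Type*} [MeasurableSpace Ω] (μ : Measure Ω) (g : Ω → EReal) : Prop :=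
  (∫⁻ ω, epos (g ω) ∂μ) ≠ ⊤ ∨ (∫⁻ ω, epos (-(g ω)) ∂μ) ≠ ⊤

/-- Outer expectation of an arbitrary extended-real map: the infimum of `E(g)` over all
measurable `g ≥ h` whose expectation exists. -/
def outerExp {Ω : Type*} [MeasurableSpace Ω] (μ : Measure Ω) (h : Ω → EReal) : EReal :=
  sInf {y : EReal | ∃ g : Ω → EReal,
    Measurable g ∧ (∀ ω, h ω ≤ g ω) ∧ eExpExists μ g ∧ eExp μ g = y}

/-- Inner expectation of an arbitrary extended-real map. -/
def innerExp {Ω : Type*} [MeasurableSpace Ω] (μ : Measure Ω) (h : Ω → EReal) : EReal :=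
  - outerExp μ (fun ω => - h ω)

/-- `g` is a minimal measurable cover of `h` w.r.t. `μ`: it is measurable, dominates `h`
pointwise, and is a.s. below any measurable map dominating `h` pointwise. -/
def IsMinMeasCover {Ω : Type*} [MeasurableSpace Ω] (μ : Measure Ω) (h g : Ω → EReal) : Prop :=
  Measurable g ∧ (∀ ω, h ω ≤ g ω) ∧
    ∀ g' : Ω → EReal, Measurable g' → (∀ ω, h ω ≤ g' ω) → ∀ᵐ ω ∂μ, g ω ≤ g' ω

/-- Absolute value on extended reals. -/
def eabs (x : EReal) : EReal := max x (-x)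

private lemma seminorm_sum_le_aux {E : Type*} [AddCommGroup E] [Module ℝ E] (N : Seminorm ℝ E)
    {ι : Type*} (s : Finset ι) (g : ι → E) : N (∑ i ∈ s, g i) ≤ ∑ i ∈ s, N (g i) := by
  induction s using Finset.cons_induction with
  | empty => simp
  | cons a s ha ih =>
      simp only [Finset.sum_cons]
      exact (map_add_le_add N _ _).trans (by linarith)

private lemma real_le_of_forall_pos_le_add_aux {a b : ℝ} (h : ∀ ε : ℝ, 0 < ε → a ≤ b + ε) :
    a ≤ b := by
  by_contra hlt
  push_neg at hlt
  have := h ((a - b) / 2) (by linarith)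
  linarith

private lemma norm_comparison_aux {m : ℕ} (N : Seminorm ℝ (Fin m → ℝ)) (hN : ∀ v, N v = 0 → v = 0) :
    ∃ c C : ℝ, 0 < c ∧ 0 < C ∧ (∀ v, c * ‖v‖ ≤ N v) ∧ ∀ v, N v ≤ C * ‖v‖ := by
  classical
  obtain ⟨C, hC0, hCb⟩ : ∃ C : ℝ, 0 < C ∧ ∀ v, N v ≤ C * ‖v‖ := by
    refine ⟨(∑ i, N (Pi.single i 1)) + 1, by positivity, fun v => ?_⟩
    have hv : v = ∑ i, v i • (Pi.single i 1 : Fin m → ℝ) := by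
      funext j
      simp [Pi.single_apply, Finset.sum_ite_eq']
    calc N v = N (∑ i, v i • (Pi.single i 1 : Fin m → ℝ)) := by rw [← hv]
      _ ≤ ∑ i, N (v i • (Pi.single i 1 : Fin m → ℝ)) := seminorm_sum_le_aux N _ _
      _ = ∑ i, |v i| * N ((Pi.single i 1 : Fin m → ℝ)) := by
          simp [map_smul_eq_mul, Real.norm_eq_abs]
      _ ≤ ∑ i, ‖v‖ * N ((Pi.single i 1 : Fin m → ℝ)) := by
          refine Finset.sum_le_sum fun i _ => ?_
          exact mul_le_mul_of_nonneg_right ((Real.norm_eq_abs (v i)) ▸ norm_le_pi_norm v i)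
            (apply_nonneg _ _)
      _ = (∑ i, N ((Pi.single i 1 : Fin m → ℝ))) * ‖v‖ := by
          rw [Finset.sum_mul]
          exact Finset.sum_congr rfl fun i _ => mul_comm _ _
      _ ≤ ((∑ i, N ((Pi.single i 1 : Fin m → ℝ))) + 1) * ‖v‖ := by
          have : (0:ℝ) ≤ ‖v‖ := norm_nonneg v
          nlinarith
  rcases subsingleton_or_nontrivial (Fin m → ℝ) with hsub | hnt
  · exact ⟨1, C, one_pos, hC0, fun v => by rw [Subsingleton.elim v 0]; simp, hCb⟩
  · have hNcont : Continuous fun v : Fin m → ℝ => N v := by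
      refine (LipschitzWith.of_dist_le_mul (K := ⟨C, hC0.le⟩) fun x y => ?_).continuous
      calc dist (N x) (N y) = |N x - N y| := Real.dist_eq _ _
        _ ≤ N (x - y) := abs_sub_map_le_sub N x y
        _ ≤ C * ‖x - y‖ := hCb _
        _ = C * dist x y := by rw [dist_eq_norm]
    have hsc : IsCompact (Metric.sphere (0 : Fin m → ℝ) 1) := isCompact_sphere 0 1
    have hsne : (Metric.sphere (0 : Fin m → ℝ) 1).Nonempty :=
      NormedSpace.sphere_nonempty.mpr zero_le_one
    obtain ⟨v₀, hv₀s, hv₀min⟩ := hsc.exists_isMinOn hsne hNcont.continuousOn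
    have hv₀norm : ‖v₀‖ = 1 := by simpa using hv₀s
    have hv₀pos : 0 < N v₀ := by
      rcases (apply_nonneg N v₀).lt_or_eq with h | h
      · exact h
      · exfalso
        have := hN v₀ h.symm
        rw [this] at hv₀norm
        simp at hv₀norm
    refine ⟨N v₀, C, hv₀pos, hC0, fun v => ?_, hCb⟩
    rcases eq_or_ne v 0 with rfl | hv
    · simp
    · have hnv : ‖v‖ ≠ 0 := norm_ne_zero_iff.mpr hv
      have hmem : ‖v‖⁻¹ • v ∈ Metric.sphere (0 : Fin m → ℝ) 1 := by
        simp [norm_smul, Real.norm_eq_abs, abs_of_nonneg (inv_nonneg.mpr (norm_nonneg v)),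
          inv_mul_cancel₀ hnv]
      have h1 : N v₀ ≤ N (‖v‖⁻¹ • v) := hv₀min hmem
      have h2 : N (‖v‖⁻¹ • v) = ‖v‖⁻¹ * N v := by
        rw [map_smul_eq_mul, Real.norm_eq_abs, abs_of_nonneg (inv_nonneg.mpr (norm_nonneg v))]
      rw [h2] at h1
      have h3 : N v₀ * ‖v‖ ≤ ‖v‖⁻¹ * N v * ‖v‖ :=
        mul_le_mul_of_nonneg_right h1 (norm_nonneg v)
      calc N v₀ * ‖v‖ ≤ ‖v‖⁻¹ * N v * ‖v‖ := h3
        _ = N v := by field_simp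

/-- If the index set `T ⊆ ℝ^m` (with a norm `‖·‖`) is bounded and there is a
Borel measurable `F : ℝ → ℝ` with `E^P(|F|) < +∞` such that
`|f_s(x) − f_t(x)| ≤ ‖s − t‖·F(x)` for all `s, t ∈ T` and `x ∈ ℝ`, then `Ê̲_n^𝒫(f)` is a
strongly consistent estimator of `E̲^𝒫(f)`: some minimal measurable covers of
`|Ê̲_n^𝒫(f) − E̲^𝒫(f)|` converge to `0` `P^∞`-a.s. -/
theorem lipschitz_consistency
    {m : ℕ} (N : Seminorm ℝ (Fin m → ℝ)) (hN : ∀ v, N v = 0 → v = 0)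
    (T : Set (Fin m → ℝ)) (hTne : T.Nonempty)
    (hTbdd : ∃ R : ℝ, ∀ t ∈ T, N t ≤ R)
    (Pt : (Fin m → ℝ) → Measure ℝ) (hPt : ∀ t ∈ T, IsProbabilityMeasure (Pt t))
    (P : Measure ℝ) [IsProbabilityMeasure P]
    (f : ℝ → ℝ) (hf : Measurable f)
    (hfint : ∀ t ∈ T, Integrable f (Pt t))
    (hsup : BddAbove ((fun t => ∫ x, |f x| ∂(Pt t)) '' T))
    (ft : (Fin m → ℝ) → ℝ → ℝ)
    (hftm : ∀ t ∈ T, Measurable (ft t)) (hfti : ∀ t ∈ T, Integrable (ft t) P)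
    (hfte : ∀ t ∈ T, ∫ x, ft t x ∂P = ∫ x, f x ∂(Pt t))
    (hftea : ∀ t ∈ T, ∫ x, |ft t x| ∂P = ∫ x, |f x| ∂(Pt t))
    (F : ℝ → ℝ) (hFm : Measurable F) (hFi : Integrable F P)
    (hlip : ∀ s ∈ T, ∀ t ∈ T, ∀ x : ℝ, |ft s x - ft t x| ≤ N (s - t) * F x)
    (μ : Measure (ℕ → ℝ)) [IsProbabilityMeasure μ]
    (hmap : ∀ k : ℕ, μ.map (fun ω => ω k) = P)
    (hind : iIndepFun (fun k (ω : ℕ → ℝ) => ω k) μ) :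
    ∃ H : ℕ → (ℕ → ℝ) → EReal,
      (∀ n : ℕ, IsMinMeasCover μ
        (fun ω => eabs ((⨅ t : T, (((n : ℝ)⁻¹ *
            ∑ k ∈ Finset.range n, ft t (ω k) : ℝ) : EReal)) -
          ⨅ t : T, ((∫ x, f x ∂(Pt t) : ℝ) : EReal))) (H n)) ∧
      ∀ᵐ ω ∂μ, Tendsto (fun n : ℕ => H n ω) atTop (𝓝 (0 : EReal)) := by
  classical
  obtain ⟨t₀, ht₀⟩ := hTne
  obtain ⟨R, hR⟩ := hTbdd
  obtain ⟨c, C, hc0, hC0, hcb, hCb⟩ := norm_comparison_aux N hN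
  have hR0 : 0 ≤ R := le_trans (apply_nonneg N t₀) (hR t₀ ht₀)
  set G : ℝ → ℝ := fun x => |F x| with hGdef
  have hGm : Measurable G := hFm.abs
  have hGi : Integrable G P := hFi.abs
  have hG0 : ∀ x, 0 ≤ G x := fun x => abs_nonneg _
  set E0 : ℝ := ∫ x, G x ∂P with hE0def
  have hE00 : 0 ≤ E0 := integral_nonneg hG0
  have hlipG : ∀ s ∈ T, ∀ t ∈ T, ∀ x, |ft s x - ft t x| ≤ N (s - t) * G x := fun s hs t ht x =>
    (hlip s hs t ht x).trans (mul_le_mul_of_nonneg_left (le_abs_self _) (apply_nonneg _ _))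
  set A : (Fin m → ℝ) → ℕ → (ℕ → ℝ) → ℝ :=
    fun t n ω => (n : ℝ)⁻¹ * ∑ k ∈ Finset.range n, ft t (ω k) with hAdef
  set S : ℕ → (ℕ → ℝ) → ℝ :=
    fun n ω => (n : ℝ)⁻¹ * ∑ k ∈ Finset.range n, G (ω k) with hSdef
  set a : (Fin m → ℝ) → ℝ := fun t => ∫ x, f x ∂(Pt t) with hadef
  have hS0 : ∀ n ω, 0 ≤ S n ω := by
    intro n ω
    exact mul_nonneg (inv_nonneg.mpr (Nat.cast_nonneg n))
      (Finset.sum_nonneg fun k _ => hG0 _)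
  -- key Lipschitz bounds
  have keyA : ∀ s ∈ T, ∀ t ∈ T, ∀ (n : ℕ) (ω : ℕ → ℝ),
      |A s n ω - A t n ω| ≤ N (s - t) * S n ω := by
    intro s hs t ht n ω
    have h1 : A s n ω - A t n ω
        = (n : ℝ)⁻¹ * ∑ k ∈ Finset.range n, (ft s (ω k) - ft t (ω k)) := by
      simp only [hAdef, Finset.sum_sub_distrib]
      ring
    rw [h1, abs_mul, abs_inv, Nat.abs_cast]
    have h2 : |∑ k ∈ Finset.range n, (ft s (ω k) - ft t (ω k))|
        ≤ ∑ k ∈ Finset.range n, N (s - t) * G (ω k) :=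
      (Finset.abs_sum_le_sum_abs _ _).trans
        (Finset.sum_le_sum fun k _ => hlipG s hs t ht _)
    calc (n : ℝ)⁻¹ * |∑ k ∈ Finset.range n, (ft s (ω k) - ft t (ω k))|
        ≤ (n : ℝ)⁻¹ * ∑ k ∈ Finset.range n, N (s - t) * G (ω k) :=
          mul_le_mul_of_nonneg_left h2 (inv_nonneg.mpr (Nat.cast_nonneg n))
      _ = N (s - t) * S n ω := by
          simp only [hSdef, ← Finset.mul_sum]
          ring
  have keya : ∀ s ∈ T, ∀ t ∈ T, |a s - a t| ≤ N (s - t) * E0 := by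
    intro s hs t ht
    have h1 : a s - a t = ∫ x, (ft s x - ft t x) ∂P := by
      rw [integral_sub (hfti s hs) (hfti t ht), hadef]
      simp only [hfte s hs, hfte t ht]
    rw [h1]
    calc |∫ x, (ft s x - ft t x) ∂P| ≤ ∫ x, |ft s x - ft t x| ∂P := by
          simpa [Real.norm_eq_abs] using
            norm_integral_le_integral_norm (μ := P) (f := fun x => ft s x - ft t x)
      _ ≤ ∫ x, N (s - t) * G x ∂P := by
          refine integral_mono ((hfti s hs).sub (hfti t ht)).abs (hGi.const_mul _) ?_
          intro x
          exact hlipG s hs t ht x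
      _ = N (s - t) * E0 := by rw [integral_const_mul, hE0def]
  have hNT : ∀ s ∈ T, ∀ t ∈ T, N (s - t) ≤ 2 * R := by
    intro s hs t ht
    have := map_sub_le_add (f := N) s t
    linarith [hR s hs, hR t ht]
  have lbA : ∀ (n : ℕ) (ω : ℕ → ℝ), ∀ t ∈ T, A t₀ n ω - 2 * R * S n ω ≤ A t n ω := by
    intro n ω t ht
    have h1 : |A t₀ n ω - A t n ω| ≤ 2 * R * S n ω :=
      (keyA t₀ ht₀ t ht n ω).trans (mul_le_mul_of_nonneg_right (hNT _ ht₀ _ ht) (hS0 n ω))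
    have := abs_le.mp h1
    linarith [this.1, this.2]
  have lba : ∀ t ∈ T, a t₀ - 2 * R * E0 ≤ a t := by
    intro t ht
    have h1 : |a t₀ - a t| ≤ 2 * R * E0 :=
      (keya t₀ ht₀ t ht).trans (mul_le_mul_of_nonneg_right (hNT _ ht₀ _ ht) hE00)
    have := abs_le.mp h1
    linarith [this.1, this.2]
  have hTne' : Nonempty ↥T := ⟨⟨t₀, ht₀⟩⟩
  have hbddA : ∀ (n : ℕ) (ω : ℕ → ℝ), BddBelow (Set.range fun t : T => A ↑t n ω) := by
    intro n ω
    refine ⟨A t₀ n ω - 2 * R * S n ω, ?_⟩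
    rintro x ⟨t, rfl⟩
    exact lbA n ω ↑t t.2
  have hbdda : BddBelow (Set.range fun t : T => a ↑t) := by
    refine ⟨a t₀ - 2 * R * E0, ?_⟩
    rintro x ⟨t, rfl⟩
    exact lba ↑t t.2
  set rN : ℕ → (ℕ → ℝ) → ℝ := fun n ω => ⨅ t : T, A ↑t n ω with hrNdef
  set ri : ℝ := ⨅ t : T, a ↑t with hridef
  have hmono : Monotone (Real.toEReal) := fun x y hxy => EReal.coe_le_coe_iff.mpr hxy
  have coeInfA : ∀ (n : ℕ) (ω : ℕ → ℝ),
      (⨅ t : T, (((n : ℝ)⁻¹ * ∑ k ∈ Finset.range n, ft t (ω k) : ℝ) : EReal))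
        = ((rN n ω : ℝ) : EReal) := by
    intro n ω
    exact (Monotone.map_ciInf_of_continuousAt (f := Real.toEReal)
      (g := fun t : T => A ↑t n ω) (continuous_coe_real_ereal.continuousAt)
      hmono (hbddA n ω)).symm
  have coeInfa : (⨅ t : T, ((∫ x, f x ∂(Pt t) : ℝ) : EReal)) = ((ri : ℝ) : EReal) := by
    exact (Monotone.map_ciInf_of_continuousAt (f := Real.toEReal)
      (g := fun t : T => a ↑t) (continuous_coe_real_ereal.continuousAt)
      hmono hbdda).symm
  have hfun : ∀ (n : ℕ) (ω : ℕ → ℝ),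
      eabs ((⨅ t : T, (((n : ℝ)⁻¹ * ∑ k ∈ Finset.range n, ft t (ω k) : ℝ) : EReal)) -
          ⨅ t : T, ((∫ x, f x ∂(Pt t) : ℝ) : EReal))
        = ((|rN n ω - ri| : ℝ) : EReal) := by
    intro n ω
    rw [coeInfA n ω, coeInfa, ← EReal.coe_sub]
    show max _ _ = _
    rw [← EReal.coe_neg, ← hmono.map_max, ← abs_eq_max_neg]
  -- measurability of rN n
  have hAm : ∀ t ∈ T, ∀ n : ℕ, Measurable fun ω : ℕ → ℝ => A t n ω := by
    intro t ht n
    exact (Finset.measurable_sum (Finset.range n)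
      (fun k _ => (hftm t ht).comp (measurable_pi_apply k))).const_mul _
  obtain ⟨D, hDc, hDd⟩ := TopologicalSpace.exists_countable_dense ↥T
  have hDne : D.Nonempty := hDd.nonempty
  have hDcnt : Countable ↥D := hDc.to_subtype
  have hDsub : Nonempty ↥D := hDne.to_subtype
  have eqInf : ∀ (n : ℕ) (ω : ℕ → ℝ), rN n ω = ⨅ d : D, A ↑↑d n ω := by
    intro n ω
    have hbddD : BddBelow (Set.range fun d : D => A ↑↑d n ω) := by
      refine ⟨A t₀ n ω - 2 * R * S n ω, ?_⟩
      rintro x ⟨d, rfl⟩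
      exact lbA n ω _ (↑d : ↥T).2
    refine le_antisymm (le_ciInf fun d => ciInf_le (hbddA n ω) ↑d) (le_ciInf fun t => ?_)
    refine real_le_of_forall_pos_le_add_aux fun ε hε => ?_
    set K : ℝ := C * (S n ω + 1) with hKdef
    have hK0 : 0 < K := by
      have := hS0 n ω
      positivity
    obtain ⟨d', hd'ball, hd'D⟩ := Metric.dense_iff.mp hDd t (ε / K) (by positivity)
    have hdist : dist d' t < ε / K := Metric.mem_ball.mp hd'ball
    have hchain : A ↑d' n ω ≤ A ↑t n ω + ε := by
      have h1 : |A ↑d' n ω - A ↑t n ω| ≤ N (↑d' - ↑t) * S n ω :=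
        keyA ↑d' d'.2 ↑t t.2 n ω
      have h2 : N ((d' : Fin m → ℝ) - ↑t) ≤ C * dist d' t := by
        have := hCb ((d' : Fin m → ℝ) - ↑t)
        rwa [← dist_eq_norm, ← Subtype.dist_eq] at this
      have h3 : N ((d' : Fin m → ℝ) - ↑t) * S n ω ≤ C * (ε / K) * S n ω := by
        refine mul_le_mul_of_nonneg_right ?_ (hS0 n ω)
        exact h2.trans (mul_le_mul_of_nonneg_left hdist.le hC0.le)
      have h4 : C * (ε / K) * S n ω ≤ ε := by
        have h5 : C * (ε / K) * S n ω = ε * (C * S n ω) / K := by ring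
        rw [h5, div_le_iff₀ hK0]
        have := hS0 n ω
        nlinarith
      have := abs_le.mp (h1.trans (h3.trans h4))
      linarith [this.1, this.2]
    calc (⨅ d : D, A ↑↑d n ω) ≤ A ↑(↑(⟨d', hd'D⟩ : D) : ↥T) n ω :=
          ciInf_le hbddD (⟨d', hd'D⟩ : D)
      _ ≤ A ↑t n ω + ε := hchain
  have hrNm : ∀ n : ℕ, Measurable (rN n) := by
    intro n
    have : (rN n) = fun ω => ⨅ d : D, A ↑↑d n ω := funext fun ω => eqInf n ω
    rw [this]
    exact Measurable.iInf fun d => hAm ↑↑d (↑d : ↥T).2 n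
  -- the candidate cover
  refine ⟨fun n ω => ((|rN n ω - ri| : ℝ) : EReal), fun n => ?_, ?_⟩
  · refine ⟨measurable_coe_real_ereal.comp ((hrNm n).sub measurable_const).abs,
      fun ω => (hfun n ω).le, fun g' hg'm hg' => ae_of_all _ fun ω => ?_⟩
    exact (hfun n ω).symm.le.trans (hg' ω)
  · -- convergence
    -- strong law for each parameter in T
    have hslln : ∀ t ∈ T, ∀ᵐ ω ∂μ, Tendsto (fun n => A t n ω) atTop (𝓝 (a t)) := by
      intro t ht
      have hXm : ∀ k : ℕ, Measurable fun ω : ℕ → ℝ => ft t (ω k) :=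
        fun k => (hftm t ht).comp (measurable_pi_apply k)
      have hmapk : ∀ j : ℕ, μ.map (fun ω : ℕ → ℝ => ft t (ω j)) = P.map (ft t) := by
        intro j
        rw [show (fun ω : ℕ → ℝ => ft t (ω j)) = (ft t) ∘ (fun ω : ℕ → ℝ => ω j) from rfl,
          ← Measure.map_map (hftm t ht) (measurable_pi_apply j), hmap j]
      have hident : ∀ k : ℕ,
          IdentDistrib (fun ω : ℕ → ℝ => ft t (ω k)) (fun ω : ℕ → ℝ => ft t (ω 0)) μ μ :=
        fun k => ⟨(hXm k).aemeasurable, (hXm 0).aemeasurable, by rw [hmapk k, hmapk 0]⟩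
      have hindep : Pairwise (Function.onFun (IndepFun · · μ) fun k (ω : ℕ → ℝ) => ft t (ω k)) :=
        fun i j hij => (hind.indepFun hij).comp (hftm t ht) (hftm t ht)
      have hint : Integrable (fun ω : ℕ → ℝ => ft t (ω 0)) μ := by
        have h1 := hfti t ht
        rw [← hmap 0] at h1
        exact (integrable_map_measure (hftm t ht).aestronglyMeasurable
          (measurable_pi_apply 0).aemeasurable).mp h1
      have hmean : (∫ ω, ft t (ω 0) ∂μ) = a t := by
        simp only [hadef]
        rw [← hfte t ht, ← hmap 0,
          integral_map (measurable_pi_apply 0).aemeasurable (hftm t ht).aestronglyMeasurable]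
      filter_upwards [strong_law_ae_real _ hint hindep hident] with ω hω
      rw [hmean] at hω
      have : (fun n : ℕ => A t n ω)
          = fun n : ℕ => (∑ k ∈ Finset.range n, ft t (ω k)) / n := by
        funext n
        rw [hAdef, div_eq_inv_mul]
      rw [this]
      exact hω
    -- strong law for G
    have hsllnG : ∀ᵐ ω ∂μ, Tendsto (fun n => S n ω) atTop (𝓝 E0) := by
      have hXm : ∀ k : ℕ, Measurable fun ω : ℕ → ℝ => G (ω k) :=
        fun k => hGm.comp (measurable_pi_apply k)
      have hmapk : ∀ j : ℕ, μ.map (fun ω : ℕ → ℝ => G (ω j)) = P.map G := by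
        intro j
        rw [show (fun ω : ℕ → ℝ => G (ω j)) = G ∘ (fun ω : ℕ → ℝ => ω j) from rfl,
          ← Measure.map_map hGm (measurable_pi_apply j), hmap j]
      have hident : ∀ k : ℕ,
          IdentDistrib (fun ω : ℕ → ℝ => G (ω k)) (fun ω : ℕ → ℝ => G (ω 0)) μ μ :=
        fun k => ⟨(hXm k).aemeasurable, (hXm 0).aemeasurable, by rw [hmapk k, hmapk 0]⟩
      have hindep : Pairwise (Function.onFun (IndepFun · · μ) fun k (ω : ℕ → ℝ) => G (ω k)) :=
        fun i j hij => (hind.indepFun hij).comp hGm hGm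
      have hint : Integrable (fun ω : ℕ → ℝ => G (ω 0)) μ := by
        have h1 := hGi
        rw [← hmap 0] at h1
        exact (integrable_map_measure hGm.aestronglyMeasurable
          (measurable_pi_apply 0).aemeasurable).mp h1
      have hmean : (∫ ω, G (ω 0) ∂μ) = E0 := by
        rw [hE0def, ← hmap 0,
          integral_map (measurable_pi_apply 0).aemeasurable hGm.aestronglyMeasurable]
      filter_upwards [strong_law_ae_real _ hint hindep hident] with ω hω
      rw [hmean] at hω
      have : (fun n : ℕ => S n ω)
          = fun n : ℕ => (∑ k ∈ Finset.range n, G (ω k)) / n := by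
        funext n
        rw [hSdef, div_eq_inv_mul]
      rw [this]
      exact hω
    -- finite nets
    have hTtb : TotallyBounded T := by
      have hbd : Bornology.IsBounded T := by
        rw [isBounded_iff_forall_norm_le]
        refine ⟨R / c, fun t ht => ?_⟩
        rw [le_div_iff₀ hc0]
        calc ‖t‖ * c = c * ‖t‖ := mul_comm _ _
          _ ≤ N t := hcb t
          _ ≤ R := hR t ht
      exact TotallyBounded.subset subset_closure hbd.isCompact_closure.totallyBounded
    have hnet : ∀ j : ℕ, ∃ s : Finset (Fin m → ℝ), ↑s ⊆ T ∧
        ∀ t ∈ T, ∃ i ∈ s, N (t - i) ≤ ((j : ℝ) + 1)⁻¹ := by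
      intro j
      have hε : (0:ℝ) < ((j : ℝ) + 1)⁻¹ / C := by positivity
      obtain ⟨u, huT, hufin, hcover⟩ := totallyBounded_iff_subset.mp hTtb _
        (Metric.dist_mem_uniformity hε)
      refine ⟨hufin.toFinset, by rwa [Set.Finite.coe_toFinset], fun t ht => ?_⟩
      obtain ⟨y, hy, hty⟩ := Set.mem_iUnion₂.mp (hcover ht)
      refine ⟨y, (Set.Finite.mem_toFinset hufin).mpr hy, ?_⟩
      have hd : dist t y < ((j : ℝ) + 1)⁻¹ / C := hty
      have : N (t - y) ≤ C * dist t y := by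
        have := hCb (t - y)
        rwa [← dist_eq_norm] at this
      calc N (t - y) ≤ C * dist t y := this
        _ ≤ C * (((j : ℝ) + 1)⁻¹ / C) := mul_le_mul_of_nonneg_left hd.le hC0.le
        _ = ((j : ℝ) + 1)⁻¹ := by field_simp
    choose net hnetT hnetcover using hnet
    have hmain : ∀ᵐ ω ∂μ, (∀ j : ℕ, ∀ i : ↥(net j : Set (Fin m → ℝ)),
        Tendsto (fun n => A ↑i n ω) atTop (𝓝 (a ↑i)))
        ∧ Tendsto (fun n => S n ω) atTop (𝓝 E0) := by
      refine Eventually.and ?_ hsllnG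
      rw [ae_all_iff]
      intro j
      rw [ae_all_iff]
      intro i
      exact hslln ↑i (hnetT j i.2)
    filter_upwards [hmain] with ω hω
    obtain ⟨hnetlim, hSlim⟩ := hω
    rw [show (0 : EReal) = ((0 : ℝ) : EReal) from rfl, EReal.tendsto_coe]
    -- the quantitative bound
    have key : ∀ (j n : ℕ), |rN n ω - ri|
        ≤ (∑ i ∈ net j, |A i n ω - a i|) + ((j : ℝ) + 1)⁻¹ * (S n ω + E0) := by
      intro j n
      set ε : ℝ := ((j : ℝ) + 1)⁻¹ with hεdef
      have hε0 : 0 ≤ ε := by positivity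
      set M : ℝ := ∑ i ∈ net j, |A i n ω - a i| with hMdef
      set D' : ℝ := M + ε * (S n ω + E0) with hD'def
      have hboth : ∀ t ∈ T, |A t n ω - a t| ≤ D' := by
        intro t ht
        obtain ⟨i, hi, hNi⟩ := hnetcover j t ht
        have hiT : i ∈ T := hnetT j hi
        have h1 : |A t n ω - A i n ω| ≤ ε * S n ω :=
          (keyA t ht i hiT n ω).trans (mul_le_mul_of_nonneg_right hNi (hS0 n ω))
        have h2 : |A i n ω - a i| ≤ M :=
          Finset.single_le_sum (f := fun i => |A i n ω - a i|)
            (fun i _ => abs_nonneg _) hi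
        have h3 : |a i - a t| ≤ ε * E0 := by
          have hrev : N (i - t) = N (t - i) := map_sub_rev N i t
          exact (keya i hiT t ht).trans
            (by rw [hrev]; exact mul_le_mul_of_nonneg_right hNi hE00)
        have heq : A t n ω - a t = (A t n ω - A i n ω) + (A i n ω - a i) + (a i - a t) := by
          ring
        rw [heq]
        calc |(A t n ω - A i n ω) + (A i n ω - a i) + (a i - a t)|
            ≤ |A t n ω - A i n ω| + |A i n ω - a i| + |a i - a t| := abs_add_three _ _ _
          _ ≤ ε * S n ω + M + ε * E0 := by linarith
          _ = D' := by rw [hD'def]; ring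
      have hup : rN n ω ≤ ri + D' := by
        have h1 : ∀ t : T, rN n ω - D' ≤ a ↑t := by
          intro t
          have h2 := (abs_le.mp (hboth ↑t t.2)).2
          have h3 : rN n ω ≤ A ↑t n ω := ciInf_le (hbddA n ω) t
          linarith
        have h4 := le_ciInf h1
        have h5 : ri = ⨅ t : T, a ↑t := rfl
        rw [← h5] at h4
        linarith
      have hdown : ri ≤ rN n ω + D' := by
        have h1 : ∀ t : T, ri - D' ≤ A ↑t n ω := by
          intro t
          have h2 := (abs_le.mp (hboth ↑t t.2)).1
          have h3 : ri ≤ a ↑t := ciInf_le hbdda t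
          linarith
        have h4 := le_ciInf h1
        have h5 : rN n ω = ⨅ t : T, A ↑t n ω := rfl
        rw [← h5] at h4
        linarith
      exact abs_le.mpr ⟨by linarith, by linarith⟩
    -- conclude
    rw [Metric.tendsto_atTop]
    intro δ hδ
    obtain ⟨j, hj⟩ := exists_nat_gt ((E0 + E0) / δ)
    have hj1 : (0:ℝ) < (j : ℝ) + 1 := by positivity
    have hjδ : ((j : ℝ) + 1)⁻¹ * (E0 + E0) < δ := by
      rw [inv_mul_lt_iff₀ hj1]
      have h1 : (E0 + E0) / δ < (j : ℝ) := hj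
      rw [div_lt_iff₀ hδ] at h1
      nlinarith
    have hMlim : Tendsto (fun n => ∑ i ∈ net j, |A i n ω - a i|) atTop (𝓝 0) := by
      have h1 : Tendsto (fun n => ∑ i ∈ net j, |A i n ω - a i|) atTop
          (𝓝 (∑ i ∈ net j, (0:ℝ))) := by
        refine tendsto_finset_sum _ fun i hi => ?_
        have h2 : Tendsto (fun n => A i n ω - a i) atTop (𝓝 (a i - a i)) :=
          (hnetlim j ⟨i, Finset.mem_coe.mpr hi⟩).sub tendsto_const_nhds
        simpa using h2.abs
      simpa using h1
    have hDlim : Tendsto (fun n => (∑ i ∈ net j, |A i n ω - a i|)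
        + ((j : ℝ) + 1)⁻¹ * (S n ω + E0)) atTop (𝓝 (((j : ℝ) + 1)⁻¹ * (E0 + E0))) := by
      have h1 : Tendsto (fun n => ((j : ℝ) + 1)⁻¹ * (S n ω + E0)) atTop
          (𝓝 (((j : ℝ) + 1)⁻¹ * (E0 + E0))) := (hSlim.add_const E0).const_mul _
      have h2 := hMlim.add h1
      simpa using h2
    have hev := hDlim.eventually_lt_const hjδ
    obtain ⟨n₀, hn₀⟩ := (eventually_atTop).mp hev
    refine ⟨n₀, fun n hn => ?_⟩
    rw [Real.dist_eq, sub_zero, abs_abs]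
    exact lt_of_le_of_lt (key j n) (hn₀ n hn)
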